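/- Let ε ∈ ℝ^M be a random vector and f: ℝ^D × ℝ^M → ℝ satisfy the additivity of the median (Assumption 3). Let ε₁, ε₂ be i.i.d. copies of ε and define ε^f(x₁,x₂) := f(x₁;ε₁) − f(x₂;ε₂). Then for any x₁, x₂ ∈ ℝ^D, E[sign(ε^f(x₁,x₂))] · sign(m_f(x₁) − m_f(x₂)) ≥ 0. -/

import Mathlib

open MeasureTheory ProbabilityTheory

/-- The center of the median of a real random variable `Y` under measure `μ`:
`(inf {t : F(t) > 1/2} + sup {t : F(t) < 1/2}) / 2` where `F` is the CDF of `Y`. -/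
noncomputable def medCenter {Ω : Type*} [MeasurableSpace Ω] (μ : Measure Ω) (Y : Ω → ℝ) : ℝ :=
  (sInf {t : ℝ | 1 / 2 < (μ {ω | Y ω ≤ t}).toReal} +
    sSup {t : ℝ | (μ {ω | Y ω ≤ t}).toReal < 1 / 2}) / 2

section aux
variable {Ω : Type*} [MeasurableSpace Ω] (μ : Measure Ω) [IsProbabilityMeasure μ]
  (Z : Ω → ℝ) (hZ : Measurable Z)

lemma sign_int (hZ : Measurable Z) :
    ∫ ω, Real.sign (Z ω) ∂μ =
      (μ {ω | 0 < Z ω}).toReal - (μ {ω | Z ω < 0}).toReal := by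
  have hfun : (fun ω => Real.sign (Z ω)) =
      fun ω => Set.indicator {ω | 0 < Z ω} (fun _ => (1:ℝ)) ω -
        Set.indicator {ω | Z ω < 0} (fun _ => (1:ℝ)) ω := by
    ext ω
    rcases lt_trichotomy (Z ω) 0 with h | h | h
    · simp [Real.sign_of_neg h, Set.indicator, h, not_lt.2 h.le, asymm h]
    · simp [h, Real.sign_zero, Set.indicator]
    · simp [Real.sign_of_pos h, Set.indicator, h, asymm h]
  have h1 : MeasurableSet {ω | 0 < Z ω} := measurableSet_lt measurable_const hZ
  have h2 : MeasurableSet {ω | Z ω < 0} := measurableSet_lt hZ measurable_const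
  rw [hfun, integral_sub ((integrable_const (1:ℝ)).indicator h1)
      ((integrable_const (1:ℝ)).indicator h2),
    integral_indicator_const (1:ℝ) h1, integral_indicator_const (1:ℝ) h2]
  simp
  rfl

lemma F_mono {s t : ℝ} (hst : s ≤ t) :
    (μ {ω | Z ω ≤ s}).toReal ≤ (μ {ω | Z ω ≤ t}).toReal :=
  ENNReal.toReal_mono (measure_ne_top μ _)
    (measure_mono fun ω (h : Z ω ≤ s) => h.trans hst)

lemma medCenter_pos (h : 0 < medCenter μ Z) :
    (μ {ω | Z ω ≤ 0}).toReal ≤ 1 / 2 := by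
  by_contra hF
  push_neg at hF
  have hinf : sInf {t : ℝ | 1 / 2 < (μ {ω | Z ω ≤ t}).toReal} ≤ 0 := by
    by_cases hb : BddBelow {t : ℝ | 1 / 2 < (μ {ω | Z ω ≤ t}).toReal}
    · exact csInf_le hb hF
    · rw [Real.sInf_of_not_bddBelow hb]
  have hsup : sSup {t : ℝ | (μ {ω | Z ω ≤ t}).toReal < 1 / 2} ≤ 0 := by
    apply Real.sSup_nonpos
    intro t ht
    by_contra hts
    push_neg at hts
    exact absurd (F_mono μ Z hts.le) (not_le.2 (lt_trans ht hF))
  have : medCenter μ Z ≤ 0 := by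
    unfold medCenter; linarith
  linarith

lemma medCenter_neg (h : medCenter μ Z < 0) :
    1 / 2 ≤ (μ {ω | Z ω < 0}).toReal := by
  by_contra hq
  push_neg at hq
  have key : ∀ t : ℝ, t < 0 → (μ {ω | Z ω ≤ t}).toReal < 1 / 2 := fun t ht =>
    lt_of_le_of_lt (ENNReal.toReal_mono (measure_ne_top μ _)
      (measure_mono fun ω (hw : Z ω ≤ t) => lt_of_le_of_lt hw ht)) hq
  have hinf : 0 ≤ sInf {t : ℝ | 1 / 2 < (μ {ω | Z ω ≤ t}).toReal} := by
    apply Real.sInf_nonneg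
    intro t ht
    by_contra hts
    push_neg at hts
    exact absurd (key t hts) (not_lt.2 (le_of_lt ht))
  have hsup : 0 ≤ sSup {t : ℝ | (μ {ω | Z ω ≤ t}).toReal < 1 / 2} := by
    by_cases hb : BddAbove {t : ℝ | (μ {ω | Z ω ≤ t}).toReal < 1 / 2}
    · by_contra hs
      push_neg at hs
      have hm : sSup {t : ℝ | (μ {ω | Z ω ≤ t}).toReal < 1 / 2} / 2 ≤
          sSup {t : ℝ | (μ {ω | Z ω ≤ t}).toReal < 1 / 2} := by
        apply le_csSup hb
        exact key _ (by linarith)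
      linarith
    · rw [Real.sSup_of_not_bddAbove hb]
  have : 0 ≤ medCenter μ Z := by
    unfold medCenter; linarith
  linarith

end aux

/-- Under additivity of the median (Assumption 3), the expectation of the sign of
`ε^f(x₁,x₂) = f(x₁;ε₁) - f(x₂;ε₂)` has the same sign as `m_f(x₁) - m_f(x₂)` in the weak
sense (first part of Proposition 5 of the paper). -/
theorem statement11 {Ω : Type*} [MeasurableSpace Ω] (μ : Measure Ω) [IsProbabilityMeasure μ]
    (D M : ℕ) (f : (Fin D → ℝ) → (Fin M → ℝ) → ℝ) (hf : ∀ x, Measurable (f x))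
    (ε₁ ε₂ : Ω → Fin M → ℝ) (hε₁ : Measurable ε₁) (hε₂ : Measurable ε₂)
    (hid : μ.map ε₁ = μ.map ε₂) (hindep : IndepFun ε₁ ε₂ μ)
    (hmed_add : ∀ x y : Fin D → ℝ,
      medCenter μ (fun ω => f x (ε₁ ω) - f y (ε₂ ω)) =
        medCenter μ (fun ω => f x (ε₁ ω)) - medCenter μ (fun ω => f y (ε₁ ω))) :
    ∀ x₁ x₂ : Fin D → ℝ,
      0 ≤ (∫ ω, Real.sign (f x₁ (ε₁ ω) - f x₂ (ε₂ ω)) ∂μ) *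
        Real.sign (medCenter μ (fun ω => f x₁ (ε₁ ω)) -
          medCenter μ (fun ω => f x₂ (ε₁ ω))) := by
  intro x₁ x₂
  set Z : Ω → ℝ := fun ω => f x₁ (ε₁ ω) - f x₂ (ε₂ ω) with hZdef
  have hZ : Measurable Z := ((hf x₁).comp hε₁).sub ((hf x₂).comp hε₂)
  have hmc : medCenter μ Z =
      medCenter μ (fun ω => f x₁ (ε₁ ω)) - medCenter μ (fun ω => f x₂ (ε₁ ω)) :=
    hmed_add x₁ x₂
  rw [← hmc, sign_int μ Z hZ]
  set p := (μ {ω | 0 < Z ω}).toReal with hp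
  set q := (μ {ω | Z ω < 0}).toReal with hq
  have hpq : p + q ≤ 1 := by
    have hdisj : Disjoint {ω | 0 < Z ω} {ω | Z ω < 0} := by
      rw [Set.disjoint_left]
      intro ω h1 h2
      simp only [Set.mem_setOf_eq] at h1 h2; linarith
    have hd : μ {ω | 0 < Z ω} + μ {ω | Z ω < 0} ≤ 1 := by
      rw [← measure_union hdisj (measurableSet_lt hZ measurable_const)]
      exact prob_le_one
    calc p + q = (μ {ω | 0 < Z ω} + μ {ω | Z ω < 0}).toReal := by
          rw [ENNReal.toReal_add (measure_ne_top μ _) (measure_ne_top μ _)]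
      _ ≤ (1 : ENNReal).toReal := ENNReal.toReal_mono (by norm_num) hd
      _ = 1 := by simp
  rcases lt_trichotomy (medCenter μ Z) 0 with h | h | h
  · rw [Real.sign_of_neg h]
    have hq2 : 1 / 2 ≤ q := medCenter_neg μ Z h
    nlinarith
  · rw [h, Real.sign_zero, mul_zero]
  · rw [Real.sign_of_pos h]
    have hF : (μ {ω | Z ω ≤ 0}).toReal ≤ 1 / 2 := medCenter_pos μ Z h
    have hpc : p = 1 - (μ {ω | Z ω ≤ 0}).toReal := by
      have hcompl : {ω | 0 < Z ω} = {ω | Z ω ≤ 0}ᶜ := by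
        ext ω; simp [not_le]
      rw [hp, hcompl, measure_compl (measurableSet_le hZ measurable_const)
        (measure_ne_top μ _)]
      rw [measure_univ, ENNReal.toReal_sub_of_le prob_le_one (by norm_num)]
      simp
    have hqF : q ≤ (μ {ω | Z ω ≤ 0}).toReal :=
      ENNReal.toReal_mono (measure_ne_top μ _) (measure_mono (Set.setOf_subset_setOf.2 fun ω => le_of_lt))
    nlinarith
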